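/- arXiv:2409.07257 — 2 statements merged into one kernel-verified Lean document; each statement's English description precedes it below -/
import Mathlib

section
/- The Euclidean minimum spanning tree of a finite point set P in a metric space is a subgraph of the relative neighborhood graph of P, assuming all pairwise distances are distinct. -/
open SimpleGraph

/-- Total weight of a graph in a finite metric space: sum of distances over edges. -/
noncomputable def graphWeight {V : Type*} [Finite V] [MetricSpace V] (G : SimpleGraph V) : ℝ :=
  ∑ e ∈ G.edgeSet.toFinite.toFinset,
    Sym2.lift ⟨fun u v => dist u v, fun u v => dist_comm u v⟩ e

/-- `G` is a minimum spanning tree of the complete distance-weighted graph on `V`. -/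
def IsMST {V : Type*} [Finite V] [MetricSpace V] (G : SimpleGraph V) : Prop :=
  G.IsTree ∧ ∀ T : SimpleGraph V, T.IsTree → graphWeight G ≤ graphWeight T

/-- All pairwise distances are distinct. -/
def DistinctDists (V : Type*) [MetricSpace V] : Prop :=
  ∀ u v x y : V, u ≠ v → x ≠ y → dist u v = dist x y → s(u, v) = s(x, y)

/-- The relative neighborhood graph: `u ~ v` iff no third point `p` satisfies
`max (dist u p) (dist v p) < dist u v`. -/
def rng (V : Type*) [MetricSpace V] : SimpleGraph V where
  Adj u v := u ≠ v ∧ ¬ ∃ p : V, p ≠ u ∧ p ≠ v ∧ max (dist u p) (dist v p) < dist u v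
  symm := by
    constructor
    rintro u v ⟨h1, h2⟩
    refine ⟨h1.symm, fun ⟨p, hpu, hpv, hp⟩ => h2 ⟨p, hpv, hpu, ?_⟩⟩
    rwa [dist_comm v u, max_comm] at hp
  loopless := ⟨fun u h => h.1 rfl⟩

/-- In `G` minus the edge `s(u,v)`, every vertex with a `G`-walk to `u` can reach
`u` or `v`. -/
lemma reach_aux {V : Type*} {G : SimpleGraph V} {u v x : V} (w : G.Walk x u) :
    (G \ fromEdgeSet {s(u, v)}).Reachable x u ∨ (G \ fromEdgeSet {s(u, v)}).Reachable x v := by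
  induction w with
  | nil => exact Or.inl (Reachable.refl _)
  | @cons x y u hadj w ih =>
    by_cases hxy : s(x, y) = s(u, v)
    · rw [Sym2.eq_iff] at hxy
      rcases hxy with ⟨rfl, rfl⟩ | ⟨rfl, rfl⟩
      · exact Or.inl (Reachable.refl _)
      · exact Or.inr (Reachable.refl _)
    · have hadj' : (G \ fromEdgeSet {s(u, v)}).Adj x y := by
        simp only [sdiff_adj, fromEdgeSet_adj, Set.mem_singleton_iff, not_and]
        exact ⟨hadj, fun h => absurd h hxy⟩
      rcases ih with h1 | h1
      · exact Or.inl (hadj'.reachable.trans h1)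
      · exact Or.inr (hadj'.reachable.trans h1)

lemma aux_exchange {V : Type*} [Finite V] [MetricSpace V] {G : SimpleGraph V}
    (hG : IsMST G) {u v p : V} (huv : G.Adj u v) (hpu : p ≠ u) (hpv : p ≠ v)
    (hreach : (G \ fromEdgeSet {s(u, v)}).Reachable p u)
    (hd : dist p v < dist u v) : False := by
  classical
  set G' : SimpleGraph V := G \ fromEdgeSet {s(u, v)} with hG'def
  have hbr : ¬ G'.Reachable u v := by
    have := (isAcyclic_iff_forall_adj_isBridge.mp hG.1.2) huv
    exact isBridge_iff.mp this
  have hne : s(p, v) ≠ s(u, v) := by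
    intro hh
    rw [Sym2.eq_iff] at hh
    rcases hh with ⟨h1, -⟩ | ⟨h1, -⟩
    · exact hpu h1
    · exact hpv h1
  have hpvG : s(p, v) ∉ G.edgeSet := by
    intro hmem
    have hadj' : G'.Adj p v := by
      simp only [hG'def, sdiff_adj, fromEdgeSet_adj, Set.mem_singleton_iff, not_and]
      exact ⟨hmem, fun h => absurd h hne⟩
    exact hbr (hreach.symm.trans hadj'.reachable)
  set T : SimpleGraph V := G' ⊔ fromEdgeSet {s(p, v)} with hTdef
  have hT_pv : T.Adj p v := by
    simp [hTdef, sup_adj, fromEdgeSet_adj, hpv]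
  have hG'T : G' ≤ T := le_sup_left
  have hTedge : T.edgeSet = insert s(p, v) (G.edgeSet \ {s(u, v)}) := by
    rw [hTdef, edgeSet_sup, hG'def, edgeSet_sdiff, edgeSet_fromEdgeSet, edgeSet_fromEdgeSet]
    ext e
    simp only [Set.mem_union, Set.mem_diff, Set.mem_singleton_iff, Set.mem_insert_iff,
      Set.mem_setOf_eq]
    constructor
    · rintro (⟨h1, h2⟩ | ⟨h1, -⟩)
      · exact Or.inr ⟨h1, fun he => h2 ⟨he, G.not_isDiag_of_mem_edgeSet h1⟩⟩
      · exact Or.inl h1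
    · rintro (rfl | ⟨h1, h2⟩)
      · exact Or.inr ⟨rfl, by simp [hpv]⟩
      · exact Or.inl ⟨h1, fun hh => h2 hh.1⟩
  -- T is connected
  have hconn : T.Connected := by
    have hne' : Nonempty V := ⟨u⟩
    rw [connected_iff]
    refine ⟨fun x y => ?_, hne'⟩
    have key : ∀ z : V, T.Reachable z v := by
      intro z
      obtain ⟨w⟩ := hG.1.1.preconnected z u
      rcases reach_aux (v := v) w with h1 | h1
      · exact (h1.mono hG'T).trans (((hreach.symm.mono hG'T)).trans hT_pv.reachable)
      · exact h1.mono hG'T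
    exact (key x).trans (key y).symm
  -- T is acyclic
  have hacyc : T.IsAcyclic := by
    intro x c hc
    by_cases hm : s(p, v) ∈ c.edges
    · have hkey := (adj_and_reachable_delete_edges_iff_exists_cycle (G := T)).mpr ⟨x, c, hc, hm⟩
      have hle : T \ fromEdgeSet {s(p, v)} ≤ G' := by
        rw [hTdef, sup_sdiff_right_self]
        exact sdiff_le
      have : G'.Reachable p v := hkey.2.mono hle
      exact hbr (hreach.symm.trans this)
    · have hsub : ∀ e ∈ c.edges, e ∈ G.edgeSet := by
        intro e he
        have : e ∈ T.edgeSet := c.edges_subset_edgeSet he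
        rw [hTedge] at this
        rcases this with rfl | ⟨h1, _⟩
        · exact absurd he hm
        · exact h1
      exact hG.1.2 (c.transfer G hsub) (hc.transfer hsub)
  have hTtree : T.IsTree := ⟨hconn, hacyc⟩
  -- weight computation
  have huvE : s(u, v) ∈ G.edgeSet.toFinite.toFinset := by
    rw [Set.Finite.mem_toFinset]; exact huv
  have hfin : T.edgeSet.toFinite.toFinset =
      insert s(p, v) ((G.edgeSet.toFinite.toFinset).erase s(u, v)) := by
    ext e
    simp [Set.Finite.mem_toFinset, hTedge, Finset.mem_insert, Finset.mem_erase, and_comm]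
  have hwT : graphWeight T = dist p v + (graphWeight G - dist u v) := by
    unfold graphWeight
    rw [hfin, Finset.sum_insert (by
      simp only [Finset.mem_erase, Set.Finite.mem_toFinset]
      rintro ⟨-, h⟩
      exact hpvG h)]
    rw [Finset.sum_erase_eq_sub huvE]
    simp
  have hlt : graphWeight T < graphWeight G := by
    rw [hwT]; linarith
  exact absurd (hG.2 T hTtree) (not_le.mpr hlt)

theorem stmt1 {V : Type*} [Finite V] [MetricSpace V] (h : DistinctDists V)
    (G : SimpleGraph V) (hG : IsMST G) : G ≤ rng V := by
  intro u v huv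
  refine ⟨huv.ne, ?_⟩
  rintro ⟨p, hpu, hpv, hp⟩
  obtain ⟨w⟩ := hG.1.1.preconnected p u
  rcases reach_aux (v := v) w with h1 | h1
  · refine aux_exchange hG huv hpu hpv h1 (lt_of_le_of_lt ?_ hp)
    rw [_root_.dist_comm]
    exact le_sup_right
  · have h1' : (G \ fromEdgeSet {s(v, u)}).Reachable p v := by
      rwa [Sym2.eq_swap] at h1
    have hp' : max (dist u p) (dist v p) < dist v u := by
      rwa [_root_.dist_comm u v] at hp
    refine aux_exchange hG huv.symm hpv hpu h1' (lt_of_le_of_lt ?_ hp')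
    rw [_root_.dist_comm]
    exact le_sup_left
end

section
/- For a finite point set P in R^d with distinct pairwise distances, the finite death times in the 0-dimensional persistence diagram of the Rips filtration are exactly the lengths of the n−1 edges of the Euclidean minimum spanning tree of P, with multiplicity. -/
open SimpleGraph

/-- Rips graph at threshold `δ`: edges between distinct points at distance `≤ δ`. -/
def ripsGraph (V : Type*) [MetricSpace V] (δ : ℝ) : SimpleGraph V where
  Adj u v := u ≠ v ∧ dist u v ≤ δ
  symm := ⟨fun u v h => ⟨h.1.symm, dist_comm u v ▸ h.2⟩⟩
  loopless := ⟨fun u h => h.1 rfl⟩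

/-- Graph with edges strictly shorter than `δ` (the Rips complex just before `δ`). -/
def ripsGraphLt (V : Type*) [MetricSpace V] (δ : ℝ) : SimpleGraph V where
  Adj u v := u ≠ v ∧ dist u v < δ
  symm := ⟨fun u v h => ⟨h.1.symm, dist_comm u v ▸ h.2⟩⟩
  loopless := ⟨fun u h => h.1 rfl⟩

/-- `C` is a connected component of the Rips complex at threshold `δ`. -/
def IsComponentAt {V : Type*} [MetricSpace V] (δ : ℝ) (C : Set V) : Prop :=
  ∃ v : V, C = {u | (ripsGraph V δ).Reachable v u}

/-- `C` appears as a connected component at some stage of the Rips filtration. -/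
def Appears {V : Type*} [MetricSpace V] (C : Set V) : Prop :=
  ∃ δ : ℝ, IsComponentAt δ C

section Helpers

variable {V : Type*}

/-- A walk avoiding an edge gives reachability in the edge-deleted graph. -/
private lemma reach_of_walk_avoiding {G : SimpleGraph V} {e : Sym2 V} {a b : V}
    (q : G.Walk a b) (h : e ∉ q.edges) : (G.deleteEdges {e}).Reachable a b := by
  refine ⟨q.transfer _ fun f hf => ?_⟩
  rw [edgeSet_deleteEdges]
  exact ⟨q.edges_subset_edgeSet hf, fun h' => h ((Set.mem_singleton_iff.1 h') ▸ hf)⟩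

/-- Any walk either survives deletion of the edge `s(x,y)`, or gets stuck at `x` or `y`. -/
private lemma reach_or_stuck {G : SimpleGraph V} {x y : V} :
    ∀ {w z : V}, G.Walk w z →
      (G.deleteEdges {s(x, y)}).Reachable w z ∨
      (G.deleteEdges {s(x, y)}).Reachable w x ∨
      (G.deleteEdges {s(x, y)}).Reachable w y := by
  classical
  intro w z p
  induction p with
  | nil => exact Or.inl (Reachable.refl _)
  | @cons u a c h q ih =>
    by_cases he : s(u, a) = s(x, y)
    · rw [Sym2.eq_iff] at he
      rcases he with ⟨hx, _⟩ | ⟨hy, _⟩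
      · subst hx; exact Or.inr (Or.inl (Reachable.refl _))
      · subst hy; exact Or.inr (Or.inr (Reachable.refl _))
    · have hadj : (G.deleteEdges {s(x, y)}).Adj u a := by
        rw [deleteEdges_adj]
        exact ⟨h, by simpa using he⟩
      rcases ih with h1 | h1 | h1
      · exact Or.inl (hadj.reachable.trans h1)
      · exact Or.inr (Or.inl (hadj.reachable.trans h1))
      · exact Or.inr (Or.inr (hadj.reachable.trans h1))

/-- In a connected graph with `s(x,y)` an edge, deleting it leaves every
vertex reachable to `x` or `y`. -/
private lemma reach_endpoint {G : SimpleGraph V} (hc : G.Connected) (x y w : V) :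
    (G.deleteEdges {s(x, y)}).Reachable w x ∨ (G.deleteEdges {s(x, y)}).Reachable w y := by
  rcases reach_or_stuck ((hc.preconnected w x).some) with h | h | h
  · exact Or.inl h
  · exact Or.inl h
  · exact Or.inr h

/-- In a tree, deleting an edge disconnects its endpoints. -/
private lemma tree_delete_not_reach {G : SimpleGraph V} (hG : G.IsTree) {x y : V}
    (hxy : s(x, y) ∈ G.edgeSet) :
    ¬ (G.deleteEdges {s(x, y)}).Reachable x y := by
  classical
  intro hr
  obtain ⟨q⟩ := hr
  have hq := q.toPath
  have hadj : G.Adj x y := hxy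
  have hne : x ≠ y := hadj.ne
  -- two distinct paths in G
  have h1 : (Walk.cons hadj Walk.nil).IsPath := by
    simp [Walk.isPath_def, hne]
  set p := (hq : (G.deleteEdges {s(x,y)}).Path x y)
  have hp2 : ((p : (G.deleteEdges {s(x,y)}).Walk x y).transfer G
      (fun e he => (edgeSet_deleteEdges _ ▸ ((p : (G.deleteEdges {s(x,y)}).Walk x y).edges_subset_edgeSet he)).1)).IsPath :=
    Walk.IsPath.transfer _ p.2
  have hdup := hG.existsUnique_path x y
  have heq := (hdup.unique h1 hp2)
  have hmem : s(x, y) ∈ (Walk.cons hadj Walk.nil).edges := by simp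
  rw [heq] at hmem
  rw [Walk.edges_transfer] at hmem
  have := (edgeSet_deleteEdges _ ▸ ((p : (G.deleteEdges {s(x,y)}).Walk x y).edges_subset_edgeSet hmem)).2
  simp at this

/-- Deleting a non-bridge edge preserves connectivity. -/
private lemma connected_delete {G : SimpleGraph V} (hc : G.Connected) {x y : V}
    (hr : (G.deleteEdges {s(x, y)}).Reachable x y) :
    (G.deleteEdges {s(x, y)}).Connected := by
  have key : ∀ w, (G.deleteEdges {s(x, y)}).Reachable w x := by
    intro w
    rcases reach_endpoint hc x y w with h | h
    · exact h
    · exact h.trans hr.symm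
  rw [connected_iff]
  exact ⟨fun a b => (key a).trans (key b).symm, hc.nonempty⟩

/-- Every connected finite graph contains a spanning tree. -/
private lemma exists_tree_le [Finite V] :
    ∀ (n : ℕ) (G : SimpleGraph V), G.edgeSet.ncard = n → G.Connected →
      ∃ T, T ≤ G ∧ T.IsTree := by
  intro n
  induction n using Nat.strong_induction_on with
  | _ n ih =>
    intro G hn hc
    by_cases hac : G.IsAcyclic
    · exact ⟨G, le_rfl, hc, hac⟩
    · rw [isAcyclic_iff_forall_adj_isBridge] at hac
      push_neg at hac
      obtain ⟨v, w, hvw, hbr⟩ := hac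
      rw [isBridge_iff] at hbr
      push_neg at hbr
      have hreach : (G.deleteEdges {s(v, w)}).Reachable v w := hbr
      have hc' : (G.deleteEdges {s(v, w)}).Connected := connected_delete hc hreach
      have hlt : (G.deleteEdges {s(v, w)}).edgeSet.ncard < n := by
        rw [edgeSet_deleteEdges, ← hn]
        have : G.edgeSet \ {s(v, w)} = G.edgeSet \ {s(v, w)} := rfl
        have := Set.ncard_diff_singleton_lt_of_mem (G.mem_edgeSet.2 hvw) G.edgeSet.toFinite
        simpa [Set.diff_eq] using this
      obtain ⟨T, hT1, hT2⟩ := ih _ hlt (G.deleteEdges {s(v, w)}) rfl hc'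
      exact ⟨T, hT1.trans (deleteEdges_le _), hT2⟩

private lemma sLen_nonneg [MetricSpace V] (e : Sym2 V) :
    0 ≤ Sym2.lift ⟨fun u v => Dist.dist u v, fun u v => dist_comm u v⟩ e := by
  induction e using Sym2.ind with
  | _ u v => simpa using dist_nonneg

private lemma graphWeight_mono [Finite V] [MetricSpace V] {T G : SimpleGraph V} (h : T ≤ G) :
    graphWeight T ≤ graphWeight G := by
  apply Finset.sum_le_sum_of_subset_of_nonneg
  · intro e he
    rw [Set.Finite.mem_toFinset] at he ⊢
    exact edgeSet_mono h he
  · exact fun e _ _ => sLen_nonneg e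

private lemma weight_swap [Finite V] [MetricSpace V] {G : SimpleGraph V} {a b c d : V}
    (hab : s(a, b) ∈ G.edgeSet) (hcd : c ≠ d) :
    graphWeight (G.deleteEdges {s(a, b)} ⊔ fromEdgeSet {s(c, d)})
      ≤ graphWeight G - dist a b + dist c d := by
  classical
  set f : Sym2 V → ℝ := Sym2.lift ⟨fun u v => dist u v, fun u v => dist_comm u v⟩ with hf
  have hfab : f s(a, b) = dist a b := by simp [hf]
  have hfcd : f s(c, d) = dist c d := by simp [hf]
  set T := G.deleteEdges {s(a, b)} ⊔ fromEdgeSet {s(c, d)} with hT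
  have hset : T.edgeSet = insert s(c, d) (G.edgeSet \ {s(a, b)}) := by
    rw [hT, edgeSet_sup, edgeSet_deleteEdges, edgeSet_fromEdgeSet]
    ext e
    simp only [Set.mem_union, Set.mem_diff, Set.mem_singleton_iff, Set.mem_insert_iff,
      Set.mem_setOf_eq]
    constructor
    · rintro (⟨h1, h2⟩ | ⟨h1, _⟩)
      · exact Or.inr ⟨h1, h2⟩
      · exact Or.inl h1
    · rintro (h1 | ⟨h1, h2⟩)
      · subst h1
        exact Or.inr ⟨rfl, by simp [Sym2.mk_isDiag_iff, hcd]⟩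
      · exact Or.inl ⟨h1, h2⟩
  have hA : s(a, b) ∈ G.edgeSet.toFinite.toFinset := by
    rw [Set.Finite.mem_toFinset]; exact hab
  have hfs : T.edgeSet.toFinite.toFinset
      = insert s(c, d) ((G.edgeSet.toFinite.toFinset).erase s(a, b)) := by
    ext e
    simp only [Set.Finite.mem_toFinset, hset, Set.mem_insert_iff, Set.mem_diff,
      Set.mem_singleton_iff, Finset.mem_insert, Finset.mem_erase, Set.Finite.mem_toFinset]
    tauto
  have herase : ∑ e ∈ (G.edgeSet.toFinite.toFinset).erase s(a, b), f e
      = graphWeight G - dist a b := by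
    have := Finset.add_sum_erase (G.edgeSet.toFinite.toFinset) f hA
    rw [graphWeight, ← hf]
    rw [hfab] at this
    linarith
  rw [graphWeight, ← hf, hfs]
  by_cases hmem : s(c, d) ∈ (G.edgeSet.toFinite.toFinset).erase s(a, b)
  · rw [Finset.insert_eq_self.2 hmem, herase]
    have : (0 : ℝ) ≤ dist c d := dist_nonneg
    linarith
  · rw [Finset.sum_insert hmem, herase, hfcd]
    ring_nf
    linarith [le_refl (graphWeight G)]

/-- The exchange argument: if `s(a,b)` is a tree edge, and `c, d` lie on the two sides of
the cut it induces, then by MST-minimality `dist a b ≤ dist c d`. -/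
private lemma exchange [Finite V] [MetricSpace V] {G : SimpleGraph V} (hG : IsMST G)
    {a b c d : V} (hab : s(a, b) ∈ G.edgeSet) (hcd : c ≠ d)
    (hac : (G.deleteEdges {s(a, b)}).Reachable a c)
    (hbd : (G.deleteEdges {s(a, b)}).Reachable b d) :
    dist a b ≤ dist c d := by
  by_contra hlt
  push_neg at hlt
  set G' := G.deleteEdges {s(a, b)} with hG'
  set T := G' ⊔ fromEdgeSet {s(c, d)} with hT
  have hle : G' ≤ T := le_sup_left
  have hTcd : T.Adj c d := by
    rw [hT, sup_adj, fromEdgeSet_adj]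
    exact Or.inr ⟨rfl, hcd⟩
  have hTconn : T.Connected := by
    have key : ∀ w, T.Reachable w a := by
      intro w
      rcases reach_endpoint hG.1.isConnected a b w with h | h
      · exact h.mono hle
      · exact ((h.mono hle).trans ((hbd.mono hle).trans
          ((hTcd.symm.reachable).trans ((hac.symm.mono hle))))) 
    rw [connected_iff]
    exact ⟨fun u v => (key u).trans (key v).symm, hG.1.isConnected.nonempty⟩
  obtain ⟨T', hT'le, hT'tree⟩ := exists_tree_le _ T rfl hTconn
  have h1 : graphWeight G ≤ graphWeight T' := hG.2 T' hT'tree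
  have h2 : graphWeight T' ≤ graphWeight T := graphWeight_mono hT'le
  have h3 : graphWeight T ≤ graphWeight G - dist a b + dist c d := weight_swap hab hcd
  linarith

/-- Splitting a path at an edge: the endpoints of the path connect to the two endpoints
of the edge in the edge-deleted graph. -/
private lemma path_split {G : SimpleGraph V} {x y : V} :
    ∀ {u v : V} (p : G.Walk u v), p.IsPath → s(x, y) ∈ p.edges →
      ((G.deleteEdges {s(x, y)}).Reachable u x ∧ (G.deleteEdges {s(x, y)}).Reachable y v) ∨
      ((G.deleteEdges {s(x, y)}).Reachable u y ∧ (G.deleteEdges {s(x, y)}).Reachable x v) := by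
  classical
  intro u v p
  induction p with
  | nil => intro _ he; simp at he
  | @cons u a c h q ih =>
    intro hp he
    rw [Walk.cons_isPath_iff] at hp
    obtain ⟨hq, hu⟩ := hp
    rw [Walk.edges_cons, List.mem_cons] at he
    rcases he with he | he
    · -- s(x,y) = s(u,a)
      have hqe : s(x, y) ∉ q.edges := by
        intro hmem
        rw [Sym2.eq_iff] at he
        rcases he with ⟨hx, hy⟩ | ⟨hx, hy⟩
        · exact hu (hx ▸ q.fst_mem_support_of_mem_edges hmem)
        · exact hu (hy ▸ q.snd_mem_support_of_mem_edges hmem)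
      have hav : (G.deleteEdges {s(x, y)}).Reachable a c := reach_of_walk_avoiding q hqe
      rw [Sym2.eq_iff] at he
      rcases he with ⟨hx, hy⟩ | ⟨hx, hy⟩
      · subst hx; subst hy
        exact Or.inl ⟨Reachable.refl _, hav⟩
      · subst hx; subst hy
        exact Or.inr ⟨Reachable.refl _, hav⟩
    · -- s(x,y) ∈ q.edges
      have hne : s(u, a) ≠ s(x, y) := by
        intro heq
        have hx := q.fst_mem_support_of_mem_edges he
        have hy := q.snd_mem_support_of_mem_edges he
        rw [Sym2.eq_iff] at heq
        rcases heq with ⟨h1, _⟩ | ⟨h1, _⟩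
        · exact hu (h1 ▸ hx)
        · exact hu (h1 ▸ hy)
      have hadj : (G.deleteEdges {s(x, y)}).Adj u a := by
        rw [deleteEdges_adj]
        exact ⟨h, by simpa using hne⟩
      rcases ih hq he with ⟨h1, h2⟩ | ⟨h1, h2⟩
      · exact Or.inl ⟨hadj.reachable.trans h1, h2⟩
      · exact Or.inr ⟨hadj.reachable.trans h1, h2⟩

/-- Finding a crossing edge: a walk in `G` from inside to outside a `K`-reachability class
passes an edge crossing the class boundary. -/
private lemma exists_crossing {G K : SimpleGraph V} {u : V} :
    ∀ {w v : V} (p : G.Walk w v), K.Reachable u w → ¬ K.Reachable u v →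
      ∃ x y, G.Adj x y ∧ K.Reachable u x ∧ ¬ K.Reachable u y := by
  intro w v p
  induction p with
  | nil => intro h1 h2; exact absurd h1 h2
  | @cons w a c h q ih =>
    intro h1 h2
    by_cases ha : K.Reachable u a
    · exact ih ha h2
    · exact ⟨w, a, h, h1, ha⟩

end Helpers

/-- For a finite point set `P` in `ℝ^d` (with `n ≥ 2` points and
distinct pairwise distances), the finite death times in the 0-dimensional persistence
diagram of the Rips filtration — the thresholds at which two previously disconnected
components merge — are exactly the lengths of the `n − 1` edges of the Euclidean
minimum spanning tree of `P`; both collections consist of `n − 1` distinct values, so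
they agree with multiplicity. -/
theorem stmt9 {d : ℕ} (P : Finset (EuclideanSpace ℝ (Fin d)))
    (hcard : 2 ≤ P.card) (hP : DistinctDists ↥P)
    (G : SimpleGraph ↥P) (hG : IsMST G) :
    {δ : ℝ | ∃ u v : ↥P, u ≠ v ∧ dist u v = δ ∧
        ¬ (ripsGraphLt ↥P δ).Reachable u v}
      = (Sym2.lift ⟨fun (u v : ↥P) => dist u v, fun u v => dist_comm u v⟩) '' G.edgeSet
    ∧ G.edgeSet.ncard = P.card - 1
    ∧ {δ : ℝ | ∃ u v : ↥P, u ≠ v ∧ dist u v = δ ∧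
        ¬ (ripsGraphLt ↥P δ).Reachable u v}.ncard = P.card - 1 := by
  classical
  set L : Sym2 ↥P → ℝ := Sym2.lift ⟨fun (u v : ↥P) => dist u v, fun u v => dist_comm u v⟩ with hL
  -- Claim 1 forward: tree edges are not reachable in the strictly-shorter graph
  have claim_fwd : ∀ u v : ↥P, s(u, v) ∈ G.edgeSet →
      ¬ (ripsGraphLt ↥P (dist u v)).Reachable u v := by
    intro u v huv hreach
    obtain ⟨q⟩ := hreach
    have hnr : ¬ (G.deleteEdges {s(u, v)}).Reachable u v :=
      tree_delete_not_reach hG.1 huv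
    obtain ⟨x, y, hxy, hux, hnuy⟩ :=
      exists_crossing (K := G.deleteEdges {s(u, v)}) q (Reachable.refl u) hnr
    have hyv : (G.deleteEdges {s(u, v)}).Reachable v y := by
      rcases reach_endpoint hG.1.isConnected u v y with h | h
      · exact absurd h.symm hnuy
      · exact h.symm
    have hxyne : x ≠ y := hxy.1
    have hd : dist u v ≤ dist x y := exchange hG huv hxyne hux hyv
    have hlt : dist x y < dist u v := hxy.2
    linarith
  -- Claim 1 backward: non-tree pairs are reachable in the strictly-shorter graph
  have claim_bwd : ∀ u v : ↥P, u ≠ v → ¬ (ripsGraphLt ↥P (dist u v)).Reachable u v →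
      s(u, v) ∈ G.edgeSet := by
    intro u v hne hreach
    by_contra hmem
    obtain ⟨p, hp, _⟩ := hG.1.existsUnique_path u v
    by_cases hall : ∀ e ∈ p.edges, e ∈ (ripsGraphLt ↥P (dist u v)).edgeSet
    · exact hreach ⟨p.transfer _ hall⟩
    · push_neg at hall
      obtain ⟨e, hep, heK⟩ := hall
      have heG : e ∈ G.edgeSet := p.edges_subset_edgeSet hep
      revert hep heK heG
      induction e using Sym2.ind with
      | _ x y =>
        intro hep heK heG
        have hadj : G.Adj x y := heG
        have hxyne : x ≠ y := hadj.ne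
        have hge : dist u v ≤ dist x y := by
          by_contra hlt
          push_neg at hlt
          exact heK ⟨hxyne, hlt⟩
        have hne2 : dist x y ≠ dist u v := by
          intro heq
          have hs := hP x y u v hxyne hne heq
          exact hmem (hs ▸ heG)
        have hgt : dist u v < dist x y := lt_of_le_of_ne hge (Ne.symm hne2)
        rcases path_split p hp hep with ⟨h1, h2⟩ | ⟨h1, h2⟩
        · -- u ~ x, y ~ v in G - s(x,y)
          have := exchange hG heG hne h1.symm h2
          linarith
        · -- u ~ y, x ~ v : use edge s(y,x)
          have heG' : s(y, x) ∈ G.edgeSet := by rwa [Sym2.eq_swap]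
          have h1' : (G.deleteEdges {s(y, x)}).Reachable y u := by
            rw [Sym2.eq_swap]; exact h1.symm
          have h2' : (G.deleteEdges {s(y, x)}).Reachable x v := by
            rwa [Sym2.eq_swap]
          have := exchange hG heG' hne h1' h2'
          rw [dist_comm y x] at this
          linarith
  -- the set equality
  have hseteq : {δ : ℝ | ∃ u v : ↥P, u ≠ v ∧ dist u v = δ ∧
      ¬ (ripsGraphLt ↥P δ).Reachable u v} = L '' G.edgeSet := by
    ext δ
    constructor
    · rintro ⟨u, v, hne, hd, hr⟩
      have : s(u, v) ∈ G.edgeSet := claim_bwd u v hne (by rwa [hd])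
      exact ⟨s(u, v), this, by simp [hL, hd]⟩
    · rintro ⟨e, he, hLe⟩
      revert he hLe
      induction e using Sym2.ind with
      | _ u v =>
        intro he hLe
        have hadj : G.Adj u v := he
        have hd : dist u v = δ := by simpa [hL] using hLe
        exact ⟨u, v, hadj.ne, hd, by rw [← hd]; exact claim_fwd u v he⟩
  -- edge count
  haveI : Fintype G.edgeSet := Set.Finite.fintype G.edgeSet.toFinite
  have hcount : G.edgeSet.ncard = P.card - 1 := by
    have h1 := hG.1.card_edgeFinset
    rw [Set.ncard_eq_toFinset_card']
    have h2 : Fintype.card ↥P = P.card := Fintype.card_coe P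
    have : G.edgeFinset.card = G.edgeSet.toFinset.card := rfl
    rw [← this]
    omega
  refine ⟨hseteq, hcount, ?_⟩
  rw [hseteq, Set.ncard_image_of_injOn, hcount]
  intro e1 he1 e2 he2 hL12
  revert he1 he2 hL12
  induction e1 using Sym2.ind with
  | _ u v =>
    induction e2 using Sym2.ind with
    | _ x y =>
      intro he1 he2 hL12
      have h1 : G.Adj u v := he1
      have h2 : G.Adj x y := he2
      have : dist u v = dist x y := by simpa [hL] using hL12
      exact hP u v x y h1.ne h2.ne this
end
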